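/- Let A < B, let k = 2m be even and let Ψ₀,…,Ψ_{2m−1} : [A,B] → ℝ be a Chebyshev system. If σ₁ and σ₂ are finitely supported nonnegative measures on [A,B], each supported on exactly m points all lying in the open interval (A,B), and ∫_A^B Ψ_i dσ₁ = ∫_A^B Ψ_i dσ₂ for all i = 0,…,2m−1, then σ₁ = σ₂. (Uniqueness of the lower principal representation for even k.) -/
import Mathlib


open MeasureTheory Set

/-- A family of functions `Ψ₀, …, Ψ_{k-1}` is a Chebyshev system on `[A,B]` if for all
points `A ≤ x₀ < x₁ < ⋯ < x_{k-1} ≤ B` the matrix `(Ψ i (x j))` has positive determinant. -/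
def IsChebyshevSystem (A B : ℝ) {k : ℕ} (Ψ : Fin k → ℝ → ℝ) : Prop :=
  ∀ x : Fin k → ℝ, StrictMono x → (∀ j, x j ∈ Set.Icc A B) →
    0 < (Matrix.of fun i j : Fin k => Ψ i (x j)).det

/-- `σ` is a finitely supported nonnegative measure on `[A,B]`, supported exactly on the
finite set `s ⊆ [A,B]`, i.e. `σ = ∑_{x ∈ s} a_x δ_x` with positive finite weights. -/
def IsAtomicMeasureOn (A B : ℝ) (σ : Measure ℝ) (s : Finset ℝ) : Prop :=
  ↑s ⊆ Set.Icc A B ∧ (∀ x ∈ s, 0 < σ {x} ∧ σ {x} < ⊤) ∧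
    σ = ∑ x ∈ s, σ {x} • Measure.dirac x

lemma integrable_dirac' (f : ℝ → ℝ) (a : ℝ) : Integrable f (Measure.dirac a) :=
  (integrable_const (f a)).congr (ae_eq_dirac f).symm

lemma atomic_apply_zero {A B : ℝ} {σ : Measure ℝ} {s : Finset ℝ}
    (h : IsAtomicMeasureOn A B σ s) {x : ℝ} (hx : x ∉ s) : σ {x} = 0 := by
  conv_lhs => rw [h.2.2]
  rw [Measure.finset_sum_apply]
  refine Finset.sum_eq_zero fun y hy => ?_
  rw [Measure.smul_apply, Measure.dirac_apply, Set.indicator_of_notMem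
    (fun h' => hx (by rw [Set.mem_singleton_iff] at h'; rwa [← h'])), smul_zero]

lemma atomic_integral {A B : ℝ} {σ : Measure ℝ} {s : Finset ℝ}
    (h : IsAtomicMeasureOn A B σ s) (f : ℝ → ℝ) :
    ∫ x, f x ∂σ = ∑ x ∈ s, (σ {x}).toReal * f x := by
  conv_lhs => rw [h.2.2]
  rw [integral_finset_sum_measure
    (fun x hx => (integrable_dirac' f x).smul_measure (h.2.1 x hx).2.ne)]
  refine Finset.sum_congr rfl fun x hx => ?_
  rw [integral_smul_measure, integral_dirac, smul_eq_mul]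


/-- Uniqueness of the lower principal representation for even `k = 2m`: two finitely
supported nonnegative measures on `[A,B]`, each supported on exactly `m` points of the
open interval `(A,B)`, with equal moments w.r.t. a Chebyshev system `Ψ₀,…,Ψ_{2m-1}`,
coincide. -/
theorem lower_principal_representation_unique_even
    {m : ℕ} (A B : ℝ) (hAB : A < B) (Ψ : Fin (2 * m) → ℝ → ℝ)
    (hcont : ∀ i, ContinuousOn (Ψ i) (Set.Icc A B))
    (hCheb : IsChebyshevSystem A B Ψ)
    (σ₁ σ₂ : Measure ℝ) (s₁ s₂ : Finset ℝ)
    (h₁ : IsAtomicMeasureOn A B σ₁ s₁) (h₂ : IsAtomicMeasureOn A B σ₂ s₂)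
    (hcard₁ : s₁.card = m) (hcard₂ : s₂.card = m)
    (hint₁ : ↑s₁ ⊆ Set.Ioo A B) (hint₂ : ↑s₂ ⊆ Set.Ioo A B)
    (hmom : ∀ i, ∫ x, Ψ i x ∂σ₁ = ∫ x, Ψ i x ∂σ₂) :
    σ₁ = σ₂ := by
  classical
  set w : ℝ → ℝ := fun x => (σ₁ {x}).toReal - (σ₂ {x}).toReal with hw
  have hsum₁ : ∀ i, ∫ x, Ψ i x ∂σ₁ = ∑ x ∈ s₁ ∪ s₂, (σ₁ {x}).toReal * Ψ i x := by
    intro i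
    rw [atomic_integral h₁]
    exact Finset.sum_subset Finset.subset_union_left
      (fun x _ hx => by rw [atomic_apply_zero h₁ hx]; simp)
  have hsum₂ : ∀ i, ∫ x, Ψ i x ∂σ₂ = ∑ x ∈ s₁ ∪ s₂, (σ₂ {x}).toReal * Ψ i x := by
    intro i
    rw [atomic_integral h₂]
    exact Finset.sum_subset Finset.subset_union_right
      (fun x _ hx => by rw [atomic_apply_zero h₂ hx]; simp)
  have hkey : ∀ i, ∑ x ∈ s₁ ∪ s₂, w x * Ψ i x = 0 := by
    intro i
    have h0 := (hsum₁ i).symm.trans ((hmom i).trans (hsum₂ i))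
    simp only [hw, sub_mul]
    rw [Finset.sum_sub_distrib, h0, sub_self]
  have hsub : ↑(s₁ ∪ s₂) ⊆ Set.Icc A B := by
    rw [Finset.coe_union]
    exact Set.union_subset h₁.1 h₂.1
  have hcard_le : (s₁ ∪ s₂).card ≤ 2 * m := by
    have := Finset.card_union_le s₁ s₂
    omega
  have hdiff : (Set.Icc A B \ ↑(s₁ ∪ s₂)).Infinite :=
    (Set.Icc_infinite hAB).diff (Finset.finite_toSet _)
  obtain ⟨u, hu_sub, hu_card⟩ := hdiff.exists_subset_card_eq (2 * m - (s₁ ∪ s₂).card)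
  have hdisj : Disjoint (s₁ ∪ s₂) u := by
    rw [Finset.disjoint_right]
    intro a ha ha'
    exact (hu_sub ha).2 (Finset.mem_coe.mpr ha')
  set t : Finset ℝ := (s₁ ∪ s₂) ∪ u with ht_def
  have ht_card : t.card = 2 * m := by
    rw [ht_def, Finset.card_union_of_disjoint hdisj, hu_card]
    omega
  have ht_sub : ↑t ⊆ Set.Icc A B := by
    rw [ht_def, Finset.coe_union]
    exact Set.union_subset hsub (fun a ha => (hu_sub ha).1)
  set x : Fin (2 * m) → ℝ := fun j => (t.orderIsoOfFin ht_card j : ℝ) with hx_def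
  have hmono : StrictMono x := fun a b h => by
    exact_mod_cast (t.orderIsoOfFin ht_card).strictMono h
  have hmem : ∀ j, x j ∈ Set.Icc A B := fun j => ht_sub (t.orderIsoOfFin ht_card j).2
  set M : Matrix (Fin (2 * m)) (Fin (2 * m)) ℝ := Matrix.of fun i j => Ψ i (x j) with hM
  have hdet : 0 < M.det := hCheb x hmono hmem
  have hwt : ∀ y ∈ t, y ∉ s₁ ∪ s₂ → w y = 0 := by
    intro y _ hy
    rw [Finset.mem_union, not_or] at hy
    simp [hw, atomic_apply_zero h₁ hy.1, atomic_apply_zero h₂ hy.2]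
  have hkey' : ∀ i, ∑ y ∈ t, w y * Ψ i y = 0 := by
    intro i
    rw [← Finset.sum_subset (Finset.subset_union_left (s₂ := u))
      (fun y hy hy' => by rw [hwt y hy hy', zero_mul])]
    exact hkey i
  have hMv : M.mulVec (fun j => w (x j)) = 0 := by
    funext i
    simp only [Matrix.mulVec, dotProduct, hM, Matrix.of_apply, Pi.zero_apply]
    have h1 : ∑ j : Fin (2 * m), Ψ i (x j) * w (x j)
        = ∑ y ∈ t, Ψ i y * w y := by
      rw [← Finset.sum_coe_sort t (fun y => Ψ i y * w y)]
      exact Fintype.sum_equiv (t.orderIsoOfFin ht_card).toEquiv _ _ (fun j => rfl)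
    rw [h1, ← hkey' i]
    exact Finset.sum_congr rfl fun y _ => mul_comm _ _
  have hvz : (fun j => w (x j)) = 0 := by
    have hunit : IsUnit M := (Matrix.isUnit_iff_isUnit_det M).mpr
      (isUnit_iff_ne_zero.mpr hdet.ne')
    have hinj : Function.Injective M.mulVec := Matrix.mulVec_injective_iff_isUnit.mpr hunit
    exact hinj (by rw [hMv, Matrix.mulVec_zero])
  have hwz : ∀ y ∈ t, w y = 0 := by
    intro y hy
    have h2 := congrFun hvz ((t.orderIsoOfFin ht_card).symm ⟨y, hy⟩)
    simpa only [hx_def, OrderIso.apply_symm_apply, Pi.zero_apply] using h2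
  have hmass : ∀ y ∈ s₁ ∪ s₂, σ₁ {y} = σ₂ {y} := by
    intro y hy
    have h1top : σ₁ {y} ≠ ⊤ := by
      by_cases h : y ∈ s₁
      · exact (h₁.2.1 y h).2.ne
      · rw [atomic_apply_zero h₁ h]; exact ENNReal.zero_ne_top
    have h2top : σ₂ {y} ≠ ⊤ := by
      by_cases h : y ∈ s₂
      · exact (h₂.2.1 y h).2.ne
      · rw [atomic_apply_zero h₂ h]; exact ENNReal.zero_ne_top
    have h3 := sub_eq_zero.mp (hwz y (Finset.mem_union_left u hy))
    exact (ENNReal.toReal_eq_toReal_iff' h1top h2top).mp h3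
  rw [h₁.2.2, h₂.2.2,
    Finset.sum_subset (Finset.subset_union_left (s₁ := s₁) (s₂ := s₂))
      (fun y _ hy => by rw [atomic_apply_zero h₁ hy, zero_smul]),
    Finset.sum_subset (Finset.subset_union_right (s₁ := s₁) (s₂ := s₂))
      (fun y _ hy => by rw [atomic_apply_zero h₂ hy, zero_smul])]
  exact Finset.sum_congr rfl fun y hy => by rw [hmass y hy]
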